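/- Let 𝒢 be a finite groupoid, α a unital partial action of 𝒢 on a commutative ring S with S = ⊕_{y∈𝒢₀} S_y, and let 𝒢 = 𝒢₁ ∪̇ … ∪̇ 𝒢_r be the decomposition of 𝒢 into connected components, where 𝒢_j has object set Z_j. Set S_j := ⊕_{y∈Z_j} S_y and let α_j = (S_g, α_g)_{g∈𝒢_j} be the restriction of α, a partial action of 𝒢_j on S_j. Then S^{α_𝒢} ⊆ S is an α_𝒢-partial Galois extension if and only if S_j^{α_j} ⊆ S_j is an α_j-partial Galois extension for every 1 ≤ j ≤ r. -/

import Mathlib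

open CategoryTheory

namespace PaperGalois

/-- A unital partial action of a groupoid (with object/morphism data given by a
`CategoryTheory.Groupoid` structure on `Obj`) on a commutative ring `S`.
For a morphism `g : a ⟶ b` (source `a`, target `b`), `e g` is the central idempotent
with `S_g = S • e g`, and `act g s` encodes `α_g(s · 1_{g⁻¹})`. -/
structure UPA (Obj : Type*) [Groupoid Obj] (S : Type*) [CommRing S] where
  e : ∀ ⦃a b : Obj⦄, (a ⟶ b) → S
  act : ∀ ⦃a b : Obj⦄, (a ⟶ b) → S → S
  idem : ∀ ⦃a b : Obj⦄ (g : a ⟶ b), e g * e g = e g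
  e_le : ∀ ⦃a b : Obj⦄ (g : a ⟶ b), e g * e (𝟙 b) = e g
  act_proj : ∀ ⦃a b : Obj⦄ (g : a ⟶ b) (s : S), act g (s * e (Groupoid.inv g)) = act g s
  act_mem : ∀ ⦃a b : Obj⦄ (g : a ⟶ b) (s : S), act g s * e g = act g s
  act_add : ∀ ⦃a b : Obj⦄ (g : a ⟶ b) (s t : S), act g (s + t) = act g s + act g t
  act_mul : ∀ ⦃a b : Obj⦄ (g : a ⟶ b) (s t : S), act g (s * t) = act g s * act g t
  act_unit : ∀ ⦃a b : Obj⦄ (g : a ⟶ b), act g (e (Groupoid.inv g)) = e g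
  act_id : ∀ (a : Obj) (s : S), act (𝟙 a) s = s * e (𝟙 a)
  act_inv : ∀ ⦃a b : Obj⦄ (g : a ⟶ b) (s : S),
      act (Groupoid.inv g) (act g s) = s * e (Groupoid.inv g)
  act_comp : ∀ ⦃a b c : Obj⦄ (h : a ⟶ b) (g : b ⟶ c) (s : S),
      act g (act h s) = act (h ≫ g) s * e g

namespace UPA

variable {Obj : Type*} [Groupoid Obj] {S : Type*} [CommRing S] (α : UPA Obj S)

lemma act_zero ⦃a b : Obj⦄ (g : a ⟶ b) : α.act g 0 = 0 := by
  have h := α.act_add g 0 0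
  rw [add_zero] at h
  exact (left_eq_add.mp h)

lemma act_neg ⦃a b : Obj⦄ (g : a ⟶ b) (s : S) : α.act g (-s) = -(α.act g s) := by
  have h := α.act_add g s (-s)
  rw [add_neg_cancel, α.act_zero] at h
  exact (eq_neg_of_add_eq_zero_right h.symm)

lemma act_one ⦃a b : Obj⦄ (g : a ⟶ b) : α.act g 1 = α.e g := by
  have h := α.act_proj g 1
  rw [one_mul, α.act_unit] at h
  exact h.symm

lemma act_e_src ⦃a b : Obj⦄ (g : a ⟶ b) : α.act g (α.e (𝟙 a)) = α.e g := by
  have h1 : α.e (𝟙 a) * α.e (Groupoid.inv g) = α.e (Groupoid.inv g) := by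
    rw [mul_comm]; exact α.e_le (Groupoid.inv g)
  have h2 := α.act_proj g (α.e (𝟙 a))
  rw [h1, α.act_unit] at h2
  exact h2.symm

/-- The set of `α`-invariant elements of `S` relative to a subgroupoid `H`:
`S^{α_H} = {s ∈ S : α_h(s·1_{h⁻¹}) = s·1_h for all h ∈ H}`. -/
def invSet (H : Subgroupoid Obj) : Set S :=
  {s : S | ∀ ⦃a b : Obj⦄ (h : a ⟶ b), h ∈ H.arrows a b → α.act h s = s * α.e h}

/-- The invariants `S_y^{α_A}` of the corner ring `S_y = S·1_y` under a set `A`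
of loops at `y`. -/
def grpInvSet (y : Obj) (A : Set (y ⟶ y)) : Set S :=
  {s : S | s * α.e (𝟙 y) = s ∧ ∀ g ∈ A, α.act g s = s * α.e g}

/-- The arrows `a ⟶ b` of the groupoid acting trivially on the subset `T ⊆ S`;
for `T` a subring this gives `𝒢_T`. -/
def fixingSet (T : Set S) (a b : Obj) : Set (a ⟶ b) :=
  {g : a ⟶ b | ∀ t ∈ T, α.act g t = t * α.e g}

/-- `⊕_{y ∈ Z} S_y`, the part of `S` supported on a set `Z` of objects. -/
def partSet (Z : Set Obj) : Set S :=
  {s : S | ∀ y : Obj, y ∉ Z → s * α.e (𝟙 y) = 0}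

/-- `T·1_y ⊆ S_y` for a subset `T ⊆ S`. -/
def cornerSet (T : Set S) (y : Obj) : Set S :=
  (fun t => t * α.e (𝟙 y)) '' T

/-- `T' ⊆ S_y` is `α_{𝒢(y,z)}`-strong. -/
def strongAt (T' : Set S) (a b : Obj) : Prop :=
  ∀ g h : a ⟶ b, (h ≫ Groupoid.inv g) ∉ α.fixingSet T' a a →
    ∀ f : S, f * f = f → f ≠ 0 → (f * α.e g = f ∨ f * α.e h = f) →
      ∃ t ∈ T', α.act g t * f ≠ α.act h t * f

/-- `T ⊆ S` is `α`-strong. -/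
def IsStrong (T : Set S) : Prop :=
  ∀ a b : Obj, α.strongAt (α.cornerSet T a) a b

/-- Existence of a partial Galois coordinate system for the restriction of `α` to the
subgroupoid `H` acting on `S_H ⊆ S` (for `H = ⊤`, `Sub = univ` this says that
`S^{α_𝒢} ⊆ S` is an `α_𝒢`-partial Galois extension). -/
def IsGaloisCoordSystem (H : Subgroupoid Obj) (Sub : Set S) : Prop :=
  ∃ (m : ℕ) (av bv : Fin m → S),
    (∀ i, av i ∈ Sub) ∧ (∀ i, bv i ∈ Sub) ∧
    (∀ ⦃a b : Obj⦄ (g : a ⟶ b), g ∈ H.arrows a b → a ≠ b →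
        ∑ i, av i * α.act g (bv i) = 0) ∧
    (∀ (a : Obj) (g : a ⟶ a), g ∈ H.arrows a a → g ≠ 𝟙 a →
        ∑ i, av i * α.act g (bv i) = 0) ∧
    (∀ a : Obj, a ∈ H.objs → ∑ i, av i * α.act (𝟙 a) (bv i) = α.e (𝟙 a))

/-- Group-type condition for the restriction of `α` to `H`, at the base object `u`:
there is a transversal (inside `H`) from `u` to every object of the `H`-component of `u`
whose ideals are as large as possible. -/
def IsGroupTypeAt (H : Subgroupoid Obj) (u : Obj) : Prop :=
  ∃ σ : ∀ v : Obj, (H.arrows u v).Nonempty → (u ⟶ v),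
    (∀ v hv, σ v hv ∈ H.arrows u v) ∧
    (∀ h, σ u h = 𝟙 u) ∧
    (∀ v hv, α.e (Groupoid.inv (σ v hv)) = α.e (𝟙 u) ∧ α.e (σ v hv) = α.e (𝟙 v))

/-- The restriction `α_H` of `α` to the subgroupoid `H` is of group-type. -/
def IsGroupType (H : Subgroupoid Obj) : Prop :=
  ∀ u ∈ H.objs, α.IsGroupTypeAt H u

end UPA

structure SubCorner (S : Type*) [CommRing S] where
  carrier : Set S
  unit : S
  unit_mem : unit ∈ carrier
  mul_unit : ∀ s ∈ carrier, s * unit = s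
  add_mem : ∀ ⦃s t : S⦄, s ∈ carrier → t ∈ carrier → s + t ∈ carrier
  mul_mem : ∀ ⦃s t : S⦄, s ∈ carrier → t ∈ carrier → s * t ∈ carrier
  neg_mem : ∀ ⦃s : S⦄, s ∈ carrier → -s ∈ carrier
  zero_mem : (0 : S) ∈ carrier

namespace SubCorner

variable {S : Type*} [CommRing S]

lemma nsmul_mem (P : SubCorner S) (n : ℕ) {s : S} (hs : s ∈ P.carrier) :
    n • s ∈ P.carrier := by
  induction n with
  | zero => simpa using P.zero_mem
  | succ n ih => rw [succ_nsmul]; exact P.add_mem ih hs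

lemma zsmul_mem (P : SubCorner S) (n : ℤ) {s : S} (hs : s ∈ P.carrier) :
    n • s ∈ P.carrier := by
  cases n with
  | ofNat n => simpa [natCast_zsmul] using P.nsmul_mem n hs
  | negSucc n => rw [negSucc_zsmul]; exact P.neg_mem (P.nsmul_mem (n+1) hs)

instance (P : SubCorner S) : CommRing ↥P.carrier where
  add a b := ⟨a.1 + b.1, P.add_mem a.2 b.2⟩
  mul a b := ⟨a.1 * b.1, P.mul_mem a.2 b.2⟩
  neg a := ⟨-a.1, P.neg_mem a.2⟩
  zero := ⟨0, P.zero_mem⟩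
  one := ⟨P.unit, P.unit_mem⟩
  add_assoc a b c := Subtype.ext (add_assoc _ _ _)
  zero_add a := Subtype.ext (zero_add _)
  add_zero a := Subtype.ext (add_zero _)
  add_comm a b := Subtype.ext (add_comm _ _)
  mul_assoc a b c := Subtype.ext (mul_assoc _ _ _)
  one_mul a := Subtype.ext (by
    show P.unit * a.1 = a.1
    rw [mul_comm]; exact P.mul_unit a.1 a.2)
  mul_one a := Subtype.ext (P.mul_unit a.1 a.2)
  left_distrib a b c := Subtype.ext (left_distrib _ _ _)
  right_distrib a b c := Subtype.ext (right_distrib _ _ _)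
  mul_comm a b := Subtype.ext (mul_comm _ _)
  zero_mul a := Subtype.ext (zero_mul _)
  mul_zero a := Subtype.ext (mul_zero _)
  neg_add_cancel a := Subtype.ext (neg_add_cancel _)
  nsmul n a := ⟨n • a.1, P.nsmul_mem n a.2⟩
  nsmul_zero a := Subtype.ext (zero_nsmul _)
  nsmul_succ n a := Subtype.ext (succ_nsmul _ _)
  zsmul n a := ⟨n • a.1, P.zsmul_mem n a.2⟩
  zsmul_zero' a := Subtype.ext (zero_zsmul _)
  zsmul_succ' n a := Subtype.ext (by
    show ((n.succ : ℤ)) • a.1 = (n : ℤ) • a.1 + a.1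
    rw [Int.natCast_succ, add_zsmul, one_zsmul])
  zsmul_neg' n a := Subtype.ext (by
    show (Int.negSucc n) • a.1 = -(((n.succ : ℤ)) • a.1)
    rw [negSucc_zsmul]
    norm_cast)

def incl {P Q : SubCorner S} (hle : P.carrier ⊆ Q.carrier) (hu : P.unit = Q.unit) :
    ↥P.carrier →+* ↥Q.carrier where
  toFun a := ⟨a.1, hle a.2⟩
  map_one' := Subtype.ext hu
  map_mul' _ _ := rfl
  map_zero' := rfl
  map_add' _ _ := rfl

def IsSepExt (P Q : SubCorner S) (hle : P.carrier ⊆ Q.carrier) (hu : P.unit = Q.unit) : Prop :=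
  letI : Algebra ↥P.carrier ↥Q.carrier := (incl hle hu).toAlgebra
  ∃ ε : TensorProduct ↥P.carrier ↥Q.carrier ↥Q.carrier,
    (∀ t : ↥Q.carrier,
        (TensorProduct.tmul ↥P.carrier t (1 : ↥Q.carrier)) * ε
          = ε * (TensorProduct.tmul ↥P.carrier (1 : ↥Q.carrier) t)) ∧
    LinearMap.mul' ↥P.carrier ↥Q.carrier ε = 1

end SubCorner

/-- A `Subring` of `S`, seen as a corner subring with identity `1`. -/
def Subring.toSC {S : Type*} [CommRing S] (T : Subring S) : SubCorner S where
  carrier := (T : Set S)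
  unit := 1
  unit_mem := T.one_mem
  mul_unit := fun s _ => mul_one s
  add_mem := fun _ _ hs ht => T.add_mem hs ht
  mul_mem := fun _ _ hs ht => T.mul_mem hs ht
  neg_mem := fun _ hs => T.neg_mem hs
  zero_mem := T.zero_mem

namespace UPA

variable {Obj : Type*} [Groupoid Obj] {S : Type*} [CommRing S] (α : UPA Obj S)

lemma invSet_one_mem (H : Subgroupoid Obj) : (1 : S) ∈ α.invSet H :=
  fun _ _ h _ => by rw [α.act_one h, one_mul]

lemma invSet_zero_mem (H : Subgroupoid Obj) : (0 : S) ∈ α.invSet H :=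
  fun _ _ h _ => by rw [α.act_zero h, zero_mul]

lemma invSet_add_mem (H : Subgroupoid Obj) {s t : S} (hs : s ∈ α.invSet H)
    (ht : t ∈ α.invSet H) : s + t ∈ α.invSet H :=
  fun _ _ h hH => by rw [α.act_add h, hs h hH, ht h hH, add_mul]

lemma invSet_mul_mem (H : Subgroupoid Obj) {s t : S} (hs : s ∈ α.invSet H)
    (ht : t ∈ α.invSet H) : s * t ∈ α.invSet H :=
  fun _ _ h hH => by
    rw [α.act_mul h, hs h hH, ht h hH, mul_mul_mul_comm, α.idem h]

lemma invSet_neg_mem (H : Subgroupoid Obj) {s : S} (hs : s ∈ α.invSet H) :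
    -s ∈ α.invSet H :=
  fun _ _ h hH => by rw [α.act_neg h, hs h hH, neg_mul]

/-- The subring of invariants `S^{α_H}` of `S`, a genuine unital subring of `S`. -/
def invariantsSubring (H : Subgroupoid Obj) : Subring S where
  carrier := α.invSet H
  one_mem' := α.invSet_one_mem H
  zero_mem' := α.invSet_zero_mem H
  add_mem' := α.invSet_add_mem H
  mul_mem' := α.invSet_mul_mem H
  neg_mem' := α.invSet_neg_mem H

/-- `S^{α_H}` as a corner subring of `S` (with identity `1`). -/
def invariantsSC (H : Subgroupoid Obj) : SubCorner S where
  carrier := α.invSet H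
  unit := 1
  unit_mem := α.invSet_one_mem H
  mul_unit := fun s _ => mul_one s
  add_mem := fun _ _ hs ht => α.invSet_add_mem H hs ht
  mul_mem := fun _ _ hs ht => α.invSet_mul_mem H hs ht
  neg_mem := fun _ hs => α.invSet_neg_mem H hs
  zero_mem := α.invSet_zero_mem H

lemma grpInvSet_unit_mem (y : Obj) (A : Set (y ⟶ y)) :
    α.e (𝟙 y) ∈ α.grpInvSet y A := by
  refine ⟨α.idem (𝟙 y), fun g _ => ?_⟩
  rw [α.act_e_src g]
  have : α.e (𝟙 y) * α.e g = α.e g := by rw [mul_comm]; exact α.e_le g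
  rw [this]

/-- `S_y^{α_A}` as a corner subring of `S` (with identity `1_y`). -/
def grpInvSC (y : Obj) (A : Set (y ⟶ y)) : SubCorner S where
  carrier := α.grpInvSet y A
  unit := α.e (𝟙 y)
  unit_mem := α.grpInvSet_unit_mem y A
  mul_unit := fun _ hs => hs.1
  add_mem := fun s t hs ht =>
    ⟨by rw [add_mul, hs.1, ht.1], fun g hg => by
      rw [α.act_add g, hs.2 g hg, ht.2 g hg, add_mul]⟩
  mul_mem := fun s t hs ht =>
    ⟨by rw [mul_assoc, ht.1], fun g hg => by
      rw [α.act_mul g, hs.2 g hg, ht.2 g hg, mul_mul_mul_comm, α.idem g]⟩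
  neg_mem := fun s hs =>
    ⟨by rw [neg_mul, hs.1], fun g hg => by rw [α.act_neg g, hs.2 g hg, neg_mul]⟩
  zero_mem := ⟨zero_mul _, fun g _ => by rw [α.act_zero g, zero_mul]⟩

lemma invSet_le (H : Subgroupoid Obj) :
    α.invSet (Subgroupoid.full (Set.univ : Set Obj)) ⊆ α.invSet H :=
  fun _ hs _ _ h _ => hs h ⟨trivial, trivial⟩

lemma invSet_le_subring {T : Subring S}
    (h : ∀ s ∈ α.invSet (Subgroupoid.full (Set.univ : Set Obj)), s ∈ T) :
    (α.invariantsSC (Subgroupoid.full (Set.univ : Set Obj))).carrier ⊆ (Subring.toSC T).carrier :=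
  h

lemma grpInvSet_le (y : Obj) (A : Set (y ⟶ y)) :
    α.grpInvSet y (Set.univ : Set (y ⟶ y)) ⊆ α.grpInvSet y A :=
  fun _ hs => ⟨hs.1, fun g _ => hs.2 g trivial⟩

end UPA

/-- **Proposition 2.8 (reduction to connected components).**
Let `𝒢` be a finite groupoid and `α` a unital partial action of `𝒢` on a commutative ring
`S = ⊕_{y ∈ 𝒢₀} S_y` (the idempotents `1_y` are orthogonal and sum to `1`).  For an object
`z`, the connected component of `z` is the full subgroupoid on
`Z = {y | 𝒢(z,y) ≠ ∅}`, acting on `S_Z = ⊕_{y ∈ Z} S_y` by restriction.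
Then `S^{α_𝒢} ⊆ S` is an `α_𝒢`-partial Galois extension if and only if for every component
the invariants form a partial Galois extension of the corresponding restricted action. -/
theorem galois_iff_components_galois
    {Obj : Type*} [Groupoid Obj] [Fintype Obj] [∀ a b : Obj, Finite (a ⟶ b)]
    {S : Type*} [CommRing S] (α : UPA Obj S)
    (hsum : ∑ y : Obj, α.e (𝟙 y) = 1)
    (horth : ∀ y z : Obj, y ≠ z → α.e (𝟙 y) * α.e (𝟙 z) = 0) :
    α.IsGaloisCoordSystem (Subgroupoid.full (Set.univ : Set Obj)) (Set.univ : Set S) ↔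
      ∀ z : Obj,
        α.IsGaloisCoordSystem (Subgroupoid.full {y : Obj | Nonempty (z ⟶ y)})
          (α.partSet {y : Obj | Nonempty (z ⟶ y)}) := by
  classical
  constructor
  · rintro ⟨m, av, bv, -, -, h3, h4, h5⟩ z
    set Zf : Finset Obj := Finset.univ.filter (fun y => Nonempty (z ⟶ y)) with hZf
    set eZ : S := ∑ y ∈ Zf, α.e (𝟙 y) with heZ
    have hmemZf : ∀ y : Obj, y ∈ Zf ↔ Nonempty (z ⟶ y) := by
      intro y; simp [hZf]
    have hpart : ∀ s : S, s * eZ ∈ α.partSet {y : Obj | Nonempty (z ⟶ y)} := by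
      intro s y hy
      have h0 : eZ * α.e (𝟙 y) = 0 := by
        rw [heZ, Finset.sum_mul]
        refine Finset.sum_eq_zero fun y' hy' => ?_
        exact horth y' y (by rintro rfl; exact hy ((hmemZf y').mp hy'))
      rw [mul_assoc, h0, mul_zero]
    have key : ∀ {a b : Obj} (g : a ⟶ b), Nonempty (z ⟶ a) → ∀ s t : S,
        (s * eZ) * α.act g (t * eZ) = s * α.act g t := by
      intro a b g ha s t
      have hb : Nonempty (z ⟶ b) := ⟨ha.some ≫ g⟩
      have hae : a ∈ Zf := (hmemZf a).mpr ha
      have hbe : b ∈ Zf := (hmemZf b).mpr hb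
      have hactsum : α.act g eZ = α.e g := by
        have hms := map_sum (AddMonoidHom.mk' (α.act g) (α.act_add g))
          (fun y => α.e (𝟙 y)) Zf
        simp only [AddMonoidHom.mk'_apply] at hms
        rw [heZ, hms, Finset.sum_eq_single a]
        · exact α.act_e_src g
        · intro y _ hy
          have h0 : α.e (𝟙 y) * α.e (Groupoid.inv g) = 0 := by
            have h1 := α.e_le (Groupoid.inv g)
            calc α.e (𝟙 y) * α.e (Groupoid.inv g)
                = α.e (Groupoid.inv g) * α.e (𝟙 a) * α.e (𝟙 y) := by rw [h1]; ring
              _ = α.e (Groupoid.inv g) * (α.e (𝟙 y) * α.e (𝟙 a)) := by ring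
              _ = 0 := by rw [horth y a hy, mul_zero]
          rw [← α.act_proj g, h0, α.act_zero]
        · intro h; exact absurd hae h
      have heg : eZ * α.e g = α.e g := by
        rw [heZ, Finset.sum_mul, Finset.sum_eq_single b]
        · rw [mul_comm]; exact α.e_le g
        · intro y _ hy
          have h1 := α.e_le g
          calc α.e (𝟙 y) * α.e g
              = α.e g * (α.e (𝟙 y) * α.e (𝟙 b)) := by
                conv_lhs => rw [← h1]
                ring
            _ = 0 := by rw [horth y b hy, mul_zero]
        · intro h; exact absurd hbe h
      calc (s * eZ) * α.act g (t * eZ)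
          = s * (eZ * α.e g) * α.act g t := by rw [α.act_mul, hactsum]; ring
        _ = s * (α.act g t * α.e g) := by rw [heg]; ring
        _ = s * α.act g t := by rw [α.act_mem]
    refine ⟨m, fun i => av i * eZ, fun i => bv i * eZ, fun i => hpart _,
      fun i => hpart _, ?_, ?_, ?_⟩
    · intro a b g hg hab
      calc ∑ i, (av i * eZ) * α.act g (bv i * eZ)
          = ∑ i, av i * α.act g (bv i) :=
            Finset.sum_congr rfl fun i _ => key g hg.1 (av i) (bv i)
        _ = 0 := h3 g ⟨trivial, trivial⟩ hab
    · intro a g hg hne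
      calc ∑ i, (av i * eZ) * α.act g (bv i * eZ)
          = ∑ i, av i * α.act g (bv i) :=
            Finset.sum_congr rfl fun i _ => key g hg.1 (av i) (bv i)
        _ = 0 := h4 a g ⟨trivial, trivial⟩ hne
    · intro a ha
      have ha' : Nonempty (z ⟶ a) := by
        rwa [Subgroupoid.mem_full_objs_iff] at ha
      calc ∑ i, (av i * eZ) * α.act (𝟙 a) (bv i * eZ)
          = ∑ i, av i * α.act (𝟙 a) (bv i) :=
            Finset.sum_congr rfl fun i _ => key (𝟙 a) ha' (av i) (bv i)
        _ = α.e (𝟙 a) := h5 a ⟨𝟙 a, trivial, trivial⟩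
  · intro h
    choose m av bv hA hB h3 h4 h5 using h
    letI st : Setoid Obj := ⟨fun a b => Nonempty (a ⟶ b),
      ⟨fun a => ⟨𝟙 a⟩, fun {a b} hab => hab.elim fun f => ⟨Groupoid.inv f⟩,
       fun {a b c} h1 h2 => h1.elim fun f => h2.elim fun g => ⟨f ≫ g⟩⟩⟩
    let r : Obj → Obj := fun a => (Quotient.mk st a).out
    have hr1 : ∀ a : Obj, Nonempty (r a ⟶ a) := fun a => Quotient.mk_out a
    have hr2 : ∀ a b : Obj, Nonempty (a ⟶ b) → r a = r b := fun a b hab =>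
      congrArg Quotient.out (Quotient.sound hab)
    have hrr : ∀ a, r (r a) = r a := fun a => hr2 _ _ (hr1 a)
    let ι := Σ z : Obj, Fin (m z)
    let E : Fin (Fintype.card ι) ≃ ι := (Fintype.equivFin ι).symm
    let A : ι → S := fun p => if r p.1 = p.1 then av p.1 p.2 else 0
    let B : ι → S := fun p => if r p.1 = p.1 then bv p.1 p.2 else 0
    have keysum : ∀ {a b : Obj} (g : a ⟶ b),
        ∑ j : Fin (Fintype.card ι), A (E j) * α.act g (B (E j))
          = ∑ i, av (r a) i * α.act g (bv (r a) i) := by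
      intro a b g
      rw [Equiv.sum_comp E (fun p => A p * α.act g (B p))]
      rw [← Finset.univ_sigma_univ, Finset.sum_sigma]
      rw [Finset.sum_eq_single (r a)]
      · refine Finset.sum_congr rfl fun i _ => ?_
        simp only [A, B, hrr a, if_true, eq_self_iff_true]
      · intro zz _ hne
        by_cases hz : r zz = zz
        · have hna : ¬ Nonempty (zz ⟶ a) := fun hzA => hne (by rw [← hz, hr2 zz a hzA])
          refine Finset.sum_eq_zero fun i _ => ?_
          have hB0 : α.act g (bv zz i) = 0 := by
            have hpa : bv zz i * α.e (𝟙 a) = 0 := hB zz i a hna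
            have h0 : bv zz i * α.e (Groupoid.inv g) = 0 := by
              have h1 := α.e_le (Groupoid.inv g)
              calc bv zz i * α.e (Groupoid.inv g)
                  = bv zz i * α.e (𝟙 a) * α.e (Groupoid.inv g) := by
                    conv_lhs => rw [← h1]
                    ring
                _ = 0 := by rw [hpa, zero_mul]
            rw [← α.act_proj g, h0, α.act_zero]
          simp only [A, B, if_pos hz, hB0, mul_zero]
        · refine Finset.sum_eq_zero fun i _ => ?_
          simp only [A, if_neg hz, zero_mul]
      · intro hmem; exact absurd (Finset.mem_univ _) hmem
    refine ⟨Fintype.card ι, fun j => A (E j), fun j => B (E j),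
      fun j => trivial, fun j => trivial, ?_, ?_, ?_⟩
    · intro a b g hg hab
      rw [keysum g]
      exact h3 (r a) g ⟨hr1 a, ⟨(hr1 a).some ≫ g⟩⟩ hab
    · intro a g hg hne
      rw [keysum g]
      exact h4 (r a) a g ⟨hr1 a, hr1 a⟩ hne
    · intro a _
      rw [keysum (𝟙 a)]
      exact h5 (r a) a ⟨𝟙 a, hr1 a, hr1 a⟩

end PaperGalois
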